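/- For every continuous function g : X → ℝ, the functional on C(X,ℝ) defined by f ↦ diam {∫ g dμ : μ ∈ M_max(f)} (the diameter of the set of integrals of g against maximising measures of f) is upper semi-continuous with respect to the supremum norm topology. -/

import Mathlib

open MeasureTheory

variable {X : Type*} [MetricSpace X] [CompactSpace X] [MeasurableSpace X] [BorelSpace X]

/-- The set of `T`-invariant Borel probability measures on `X`. -/
def invMeasures (T : X → X) : Set (ProbabilityMeasure X) :=
  {μ | MeasurePreserving T (μ : Measure X) (μ : Measure X)}

/-- `beta T f = sup_{μ ∈ M_T} ∫ f dμ`. -/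
noncomputable def beta (T : X → X) (f : X → ℝ) : ℝ :=
  sSup ((fun μ : ProbabilityMeasure X => ∫ x, f x ∂(μ : Measure X)) '' invMeasures T)

/-- The set of maximising measures of `f`. -/
def Mmax (T : X → X) (f : X → ℝ) : Set (ProbabilityMeasure X) :=
  {μ | μ ∈ invMeasures T ∧ ∫ x, f x ∂(μ : Measure X) = beta T f}

/-- The set of integrals of `g` against the maximising measures of `f`. -/
noncomputable def maxInts (T : X → X) (f g : X → ℝ) : Set ℝ :=
  (fun μ : ProbabilityMeasure X => ∫ x, g x ∂(μ : Measure X)) '' Mmax T f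

section Aux

open Filter Topology BoundedContinuousFunction TopologicalSpace Set

variable [Nonempty X]

/-- Integral of a continuous function against a probability measure. -/
noncomputable def intf (f : C(X, ℝ)) (ν : ProbabilityMeasure X) : ℝ :=
  ∫ x, f x ∂(ν : Measure X)

lemma intf_eq_bcf (f : C(X, ℝ)) (ν : ProbabilityMeasure X) :
    intf f ν = ∫ x, (mkOfCompact f) x ∂(ν : Measure X) := rfl

lemma integrable_cm (f : C(X, ℝ)) (ν : ProbabilityMeasure X) :
    Integrable (fun x => f x) (ν : Measure X) :=
  (mkOfCompact f).integrable _

lemma abs_intf_le (f : C(X, ℝ)) (ν : ProbabilityMeasure X) : |intf f ν| ≤ ‖f‖ := by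
  rw [intf_eq_bcf]
  have := (mkOfCompact f).norm_integral_le_norm (ν : Measure X)
  simpa [Real.norm_eq_abs] using this

lemma continuous_intf (f : C(X, ℝ)) : Continuous (intf f) := by
  rw [continuous_iff_continuousAt]
  intro ν
  have := (ProbabilityMeasure.tendsto_iff_forall_integral_tendsto
    (F := 𝓝 ν) (μs := id) (μ := ν)).mp tendsto_id (mkOfCompact f)
  exact this

lemma continuous_intf2 : Continuous (fun p : C(X, ℝ) × ProbabilityMeasure X => intf p.1 p.2) := by
  rw [continuous_iff_continuousAt]
  rintro ⟨f₀, ν₀⟩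
  have key : ∀ p : C(X, ℝ) × ProbabilityMeasure X,
      intf p.1 p.2 = intf (p.1 - f₀) p.2 + intf f₀ p.2 := by
    rintro ⟨f, ν⟩
    simp only [intf]
    rw [← integral_add (integrable_cm (f - f₀) ν) (integrable_cm f₀ ν)]
    congr 1
    ext x
    simp
  simp only [ContinuousAt]
  rw [show intf f₀ ν₀ = 0 + intf f₀ ν₀ by ring]
  simp only [funext key]
  apply Tendsto.add
  · apply squeeze_zero_norm (fun p => abs_intf_le (p.1 - f₀) p.2)
    have : Tendsto (fun p : C(X, ℝ) × ProbabilityMeasure X => p.1) (𝓝 (f₀, ν₀)) (𝓝 f₀) :=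
      continuous_fst.continuousAt
    have h0 : Tendsto (fun p : C(X, ℝ) × ProbabilityMeasure X => ‖p.1 - f₀‖) (𝓝 (f₀, ν₀))
        (𝓝 ‖f₀ - f₀‖) := ((this.sub_const f₀).norm)
    simpa using h0
  · exact ((continuous_intf f₀).comp continuous_snd).continuousAt

lemma intf_add (f g : C(X, ℝ)) (ν : ProbabilityMeasure X) :
    intf (f + g) ν = intf f ν + intf g ν := by
  simp only [intf]
  rw [← integral_add (integrable_cm f ν) (integrable_cm g ν)]
  rfl

lemma intf_sub (f g : C(X, ℝ)) (ν : ProbabilityMeasure X) :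
    intf (f - g) ν = intf f ν - intf g ν := by
  simp only [intf]
  rw [← integral_sub (integrable_cm f ν) (integrable_cm g ν)]
  rfl

lemma intf_mono {f g : C(X, ℝ)} (h : ∀ x, f x ≤ g x) (ν : ProbabilityMeasure X) :
    intf f ν ≤ intf g ν :=
  integral_mono (integrable_cm f ν) (integrable_cm g ν) h

lemma intf_one (ν : ProbabilityMeasure X) : intf (1 : C(X, ℝ)) ν = 1 := by
  simp [intf]

end Aux

section Compactness

open Filter Topology BoundedContinuousFunction TopologicalSpace Set

set_option linter.unusedSectionVars false

open scoped ENNReal NNReal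

variable [Nonempty X]

/-- Admissible test functions for a compact set: nonnegative, at least 1 on `K`. -/
def adm (K : Set X) : Set C(X, ℝ) :=
  {f | (∀ x, 0 ≤ f x) ∧ ∀ x ∈ K, 1 ≤ f x}

lemma one_mem_adm (K : Set X) : (1 : C(X, ℝ)) ∈ adm K :=
  ⟨fun _ => zero_le_one, fun _ _ => le_refl 1⟩

variable (L : C(X, ℝ) → ℝ)
  (hadd : ∀ f g, L (f + g) = L f + L g)
  (hmono : ∀ f g : C(X, ℝ), (∀ x, f x ≤ g x) → L f ≤ L g)
  (hone : L 1 = 1)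

/-- Riesz-type content: `inf` of `L` over admissible functions. -/
noncomputable def lam0 (K : Set X) : ℝ := sInf (L '' adm K)

section LProps

include hadd hmono

lemma L_zero : L 0 = 0 := by
  have := hadd 0 0; simp at this; linarith

lemma L_nonneg {f : C(X, ℝ)} (hf : ∀ x, 0 ≤ f x) : 0 ≤ L f := by
  have := hmono 0 f (by simpa using hf)
  rwa [L_zero L hadd hmono] at this

lemma adm_img_nonempty (K : Set X) : (L '' adm K).Nonempty :=
  ⟨L 1, 1, one_mem_adm K, rfl⟩

lemma adm_img_bddBelow (K : Set X) : BddBelow (L '' adm K) := by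
  refine ⟨0, ?_⟩
  rintro b ⟨f, hf, rfl⟩
  exact L_nonneg L hadd hmono hf.1

lemma lam0_nonneg (K : Set X) : 0 ≤ lam0 L K :=
  le_csInf (adm_img_nonempty L hadd hmono K) (by rintro b ⟨f, hf, rfl⟩; exact L_nonneg L hadd hmono hf.1)

lemma lam0_le {K : Set X} {f : C(X, ℝ)} (hf : f ∈ adm K) : lam0 L K ≤ L f :=
  csInf_le (adm_img_bddBelow L hadd hmono K) ⟨f, hf, rfl⟩

lemma lam0_mono {K₁ K₂ : Set X} (h : K₁ ⊆ K₂) : lam0 L K₁ ≤ lam0 L K₂ := by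
  apply csInf_le_csInf (adm_img_bddBelow L hadd hmono K₁) (adm_img_nonempty L hadd hmono K₂)
  apply Set.image_mono
  rintro f ⟨h0, h1⟩
  exact ⟨h0, fun x hx => h1 x (h hx)⟩

lemma exists_adm_lt (K : Set X) {ε : ℝ} (hε : 0 < ε) :
    ∃ f ∈ adm K, L f < lam0 L K + ε := by
  obtain ⟨b, ⟨f, hf, rfl⟩, hb⟩ :=
    exists_lt_of_csInf_lt (adm_img_nonempty L hadd hmono K) (lt_add_of_pos_right (lam0 L K) hε)
  exact ⟨f, hf, hb⟩

lemma lam0_union_le (K₁ K₂ : Set X) :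
    lam0 L (K₁ ∪ K₂) ≤ lam0 L K₁ + lam0 L K₂ := by
  apply le_of_forall_pos_le_add
  intro ε hε
  obtain ⟨f₁, hf₁, hLf₁⟩ := exists_adm_lt L hadd hmono K₁ (half_pos hε)
  obtain ⟨f₂, hf₂, hLf₂⟩ := exists_adm_lt L hadd hmono K₂ (half_pos hε)
  have hmem : f₁ + f₂ ∈ adm (K₁ ∪ K₂) := by
    constructor
    · intro x; have := hf₁.1 x; have := hf₂.1 x; simp only [ContinuousMap.add_apply]; linarith
    · rintro x (hx | hx) <;> simp only [ContinuousMap.add_apply]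
      · have := hf₁.2 x hx; have := hf₂.1 x; linarith
      · have := hf₂.2 x hx; have := hf₁.1 x; linarith
  have := lam0_le L hadd hmono hmem
  rw [hadd] at this
  linarith

lemma le_lam0_union {K₁ K₂ : Set X} (h₁ : IsClosed K₁) (h₂ : IsClosed K₂)
    (hd : Disjoint K₁ K₂) :
    lam0 L K₁ + lam0 L K₂ ≤ lam0 L (K₁ ∪ K₂) := by
  apply le_csInf (adm_img_nonempty L hadd hmono (K₁ ∪ K₂))
  rintro b ⟨f, hf, rfl⟩
  obtain ⟨g, hg0, hg1, hg01⟩ := exists_continuous_zero_one_of_isClosed h₂ h₁ hd.symm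
  have hfg : f * g ∈ adm K₁ := by
    constructor
    · intro x
      exact mul_nonneg (hf.1 x) (hg01 x).1
    · intro x hx
      have : g x = 1 := hg1 hx
      simp only [ContinuousMap.mul_apply, this, mul_one]
      exact hf.2 x (Set.mem_union_left _ hx)
  have hfg' : f * (1 - g) ∈ adm K₂ := by
    constructor
    · intro x
      have := (hg01 x).2
      simp only [ContinuousMap.mul_apply, ContinuousMap.sub_apply, ContinuousMap.one_apply]
      have := hf.1 x; nlinarith
    · intro x hx
      have : g x = 0 := hg0 hx
      simp only [ContinuousMap.mul_apply, ContinuousMap.sub_apply, ContinuousMap.one_apply, this]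
      simpa using hf.2 x (Set.mem_union_right _ hx)
  have hsum : f * g + f * (1 - g) = f := by ext x; simp; ring
  have := hadd (f * g) (f * (1 - g))
  rw [hsum] at this
  calc lam0 L K₁ + lam0 L K₂ ≤ L (f * g) + L (f * (1 - g)) :=
        add_le_add (lam0_le L hadd hmono hfg) (lam0_le L hadd hmono hfg')
    _ = L f := this.symm

/-- The content associated to `L`. -/
noncomputable def rieszCont : Content X where
  toFun K := Real.toNNReal (lam0 L K)
  mono' K₁ K₂ h := Real.toNNReal_mono (lam0_mono L hadd hmono h)
  sup_disjoint' K₁ K₂ hd h₁ h₂ := by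
    have heq : lam0 L (↑K₁ ∪ ↑K₂) = lam0 L K₁ + lam0 L K₂ :=
      le_antisymm (lam0_union_le L hadd hmono _ _) (le_lam0_union L hadd hmono h₁ h₂ hd)
    show Real.toNNReal (lam0 L (↑K₁ ∪ ↑K₂)) = _
    rw [heq, Real.toNNReal_add (lam0_nonneg L hadd hmono _) (lam0_nonneg L hadd hmono _)]
  sup_le' K₁ K₂ := by
    show Real.toNNReal (lam0 L (↑K₁ ∪ ↑K₂)) ≤ _
    calc Real.toNNReal (lam0 L (↑K₁ ∪ ↑K₂))
        ≤ Real.toNNReal (lam0 L K₁ + lam0 L K₂) :=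
          Real.toNNReal_mono (lam0_union_le L hadd hmono _ _)
      _ ≤ _ := Real.toNNReal_add_le

lemma rieszCont_le_measure_open {G : Set X} (hG : IsOpen G) (K : TopologicalSpace.Compacts X)
    (hKG : (K : Set X) ⊆ G) :
    ((Real.toNNReal (lam0 L ↑K) : ℝ≥0) : ℝ≥0∞) ≤ (rieszCont L hadd hmono).measure G := by
  rw [Content.measure_apply _ hG.measurableSet, Content.outerMeasure_of_isOpen _ _ hG]
  exact (rieszCont L hadd hmono).le_innerContent K ⟨G, hG⟩ hKG

include hone

lemma lam0_le_one (K : Set X) : lam0 L K ≤ 1 := by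
  have := lam0_le L hadd hmono (one_mem_adm K)
  rwa [hone] at this

lemma one_le_lam0_univ : 1 ≤ lam0 L Set.univ := by
  apply le_csInf (adm_img_nonempty L hadd hmono _)
  rintro b ⟨f, hf, rfl⟩
  have := hmono 1 f (fun x => hf.2 x (Set.mem_univ x))
  rwa [hone] at this

lemma rieszCont_measure_univ : (rieszCont L hadd hmono).measure Set.univ = 1 := by
  rw [Content.measure_apply _ MeasurableSet.univ,
    Content.outerMeasure_of_isOpen _ _ isOpen_univ]
  have hcoe : ∀ K : TopologicalSpace.Compacts X,
      ((rieszCont L hadd hmono) K : ℝ≥0∞) = ((Real.toNNReal (lam0 L K) : ℝ≥0) : ℝ≥0∞) :=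
    fun K => rfl
  apply le_antisymm
  · refine le_trans ((rieszCont L hadd hmono).innerContent_le
      ⟨Set.univ, isOpen_univ⟩ ⟨Set.univ, isCompact_univ⟩ subset_rfl) ?_
    rw [hcoe, show ((1 : ℝ≥0∞) = ((1 : ℝ≥0) : ℝ≥0∞)) from rfl, ENNReal.coe_le_coe]
    exact Real.toNNReal_le_one.mpr (lam0_le_one L hadd hmono hone _)
  · refine le_trans ?_ ((rieszCont L hadd hmono).le_innerContent
      ⟨Set.univ, isCompact_univ⟩ ⟨Set.univ, isOpen_univ⟩ subset_rfl)
    rw [hcoe, show ((1 : ℝ≥0∞) = ((1 : ℝ≥0) : ℝ≥0∞)) from rfl, ENNReal.coe_le_coe]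
    rw [show ((1 : ℝ≥0) = Real.toNNReal 1) by simp]
    exact Real.toNNReal_mono (one_le_lam0_univ L hadd hmono hone)

end LProps

variable (X) in
theorem probMeasCompact : CompactSpace (ProbabilityMeasure X) := by
  letI : MetricSpace (ProbabilityMeasure X) := TopologicalSpace.metrizableSpaceMetric _
  rw [compactSpace_iff_seqCompactSpace]
  refine ⟨?_⟩
  intro νs _
  obtain ⟨u, hu⟩ := TopologicalSpace.exists_dense_seq C(X, ℝ)
  haveI : ∀ k : ℕ, CompactSpace (Set.Icc (-‖u k‖) ‖u k‖ : Set ℝ) :=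
    fun k => isCompact_iff_compactSpace.mp isCompact_Icc
  let pts : ℕ → ∀ k : ℕ, (Set.Icc (-‖u k‖) ‖u k‖ : Set ℝ) := fun n k =>
    ⟨intf (u k) (νs n), by
      have := abs_intf_le (u k) (νs n); rw [abs_le] at this; exact ⟨this.1, this.2⟩⟩
  obtain ⟨q, -, φ, hφ, hconv⟩ := isCompact_univ.tendsto_subseq
    (x := pts) (fun n => Set.mem_univ _)
  have hk : ∀ k, Tendsto (fun j => intf (u k) (νs (φ j))) atTop (𝓝 (q k : ℝ)) := by
    intro k
    have h1 : Tendsto (fun j => (pts (φ j)) k) atTop (𝓝 (q k)) := (tendsto_pi_nhds.mp hconv) k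
    exact ((continuous_subtype_val.tendsto (q k)).comp h1 : _)
  have key : ∀ f : C(X, ℝ), ∃ l, Tendsto (fun j => intf f (νs (φ j))) atTop (𝓝 l) := by
    intro f
    have hdistle : ∀ (h : C(X, ℝ)) (ν : ProbabilityMeasure X),
        dist (intf f ν) (intf h ν) ≤ dist f h := by
      intro h ν
      rw [Real.dist_eq, ← intf_sub f h ν]
      exact le_trans (abs_intf_le _ _) (le_of_eq (dist_eq_norm f h).symm)
    have hcauchy : CauchySeq (fun j => intf f (νs (φ j))) := by
      rw [Metric.cauchySeq_iff]
      intro ε hε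
      obtain ⟨k, hk'⟩ := hu.exists_dist_lt f (show (0:ℝ) < ε / 4 by positivity)
      have hc : CauchySeq (fun j => intf (u k) (νs (φ j))) := (hk k).cauchySeq
      rw [Metric.cauchySeq_iff] at hc
      obtain ⟨N, hN⟩ := hc (ε / 2) (by positivity)
      refine ⟨N, fun m hm n hn => ?_⟩
      calc dist (intf f (νs (φ m))) (intf f (νs (φ n)))
          ≤ dist (intf f (νs (φ m))) (intf (u k) (νs (φ m)))
            + dist (intf (u k) (νs (φ m))) (intf (u k) (νs (φ n)))
            + dist (intf (u k) (νs (φ n))) (intf f (νs (φ n))) := dist_triangle4 _ _ _ _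
        _ < ε / 4 + ε / 2 + ε / 4 := by
            have h1 := hdistle (u k) (νs (φ m))
            have h2 := hN m hm n hn
            have h3 := hdistle (u k) (νs (φ n))
            have h3' : dist (intf (u k) (νs (φ n))) (intf f (νs (φ n)))
                = dist (intf f (νs (φ n))) (intf (u k) (νs (φ n))) := dist_comm _ _
            linarith
        _ = ε := by ring
    exact cauchySeq_tendsto_of_complete hcauchy
  choose L hL using key
  have hadd : ∀ f g : C(X, ℝ), L (f + g) = L f + L g := fun f g =>
    tendsto_nhds_unique (hL (f + g))
      (by simpa only [intf_add] using (hL f).add (hL g))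
  have hmono : ∀ f g : C(X, ℝ), (∀ x, f x ≤ g x) → L f ≤ L g := fun f g h =>
    le_of_tendsto_of_tendsto' (hL f) (hL g) (fun j => intf_mono h _)
  have hone : L 1 = 1 :=
    tendsto_nhds_unique (hL 1) (by simpa only [intf_one] using
      (tendsto_const_nhds : Tendsto (fun _ : ℕ => (1 : ℝ)) atTop (𝓝 1)))
  haveI hP : IsProbabilityMeasure ((rieszCont L hadd hmono).measure) :=
    ⟨rieszCont_measure_univ L hadd hmono hone⟩
  refine ⟨⟨(rieszCont L hadd hmono).measure, hP⟩, Set.mem_univ _, φ, hφ, ?_⟩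
  apply tendsto_of_forall_isOpen_le_liminf
  intro G hG
  set P0 : ProbabilityMeasure X := ⟨(rieszCont L hadd hmono).measure, hP⟩ with hP0
  set r := Filter.atTop.liminf (fun j => (νs (φ j)) G) with hr
  -- reduce to an `ℝ≥0∞` inequality on the content measure
  have main : ((P0 : Measure X) G) ≤ (r : ℝ≥0∞) := by
    have hinner : ((P0 : Measure X) G)
        = (rieszCont L hadd hmono).innerContent ⟨G, hG⟩ := by
      show (rieszCont L hadd hmono).measure G = _
      rw [Content.measure_apply _ hG.measurableSet, Content.outerMeasure_of_isOpen _ _ hG]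
    rw [hinner, Content.innerContent]
    refine iSup₂_le fun K hK => ?_
    show ((Real.toNNReal (lam0 L ↑K) : ℝ≥0) : ℝ≥0∞) ≤ _
    rw [ENNReal.coe_le_coe, Real.toNNReal_le_iff_le_coe]
    -- Urysohn function
    obtain ⟨g, hg0, hg1, hg01⟩ := exists_continuous_zero_one_of_isClosed
      (hG.isClosed_compl) (K.isCompact.isClosed)
      ((disjoint_compl_left : Disjoint Gᶜ G).mono_right hK)
    have hgadm : g ∈ adm (↑K : Set X) :=
      ⟨fun x => (hg01 x).1, fun x hx => (hg1 hx).symm.le⟩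
    have h2 : ∀ ν : ProbabilityMeasure X, intf g ν ≤ ((ν G : ℝ≥0) : ℝ) := by
      intro ν
      have hint : Integrable (fun x => g x) (ν : Measure X) := integrable_cm g ν
      have hsplit : (∫ x in G, g x ∂(ν : Measure X)) + ∫ x in Gᶜ, g x ∂(ν : Measure X)
          = ∫ x, g x ∂(ν : Measure X) := integral_add_compl hG.measurableSet hint
      have hzero : ∫ x in Gᶜ, g x ∂(ν : Measure X) = 0 := by
        rw [setIntegral_congr_fun hG.isClosed_compl.measurableSet hg0]
        simp
      have hle : ∫ x in G, g x ∂(ν : Measure X) ≤ ∫ x in G, (1 : ℝ) ∂(ν : Measure X) :=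
        setIntegral_mono_on hint.integrableOn (integrable_const 1).integrableOn
          hG.measurableSet (fun x _ => (hg01 x).2)
      have hconst : ∫ x in G, (1 : ℝ) ∂(ν : Measure X) = ((ν : Measure X) G).toReal := by
        simp
        rfl
      have hcoe : ((ν G : ℝ≥0) : ℝ) = ((ν : Measure X) G).toReal := rfl
      show ∫ x, g x ∂(ν : Measure X) ≤ _
      rw [← hsplit, hzero, hcoe]
      linarith
    have h3 : lam0 L ↑K ≤ L g := lam0_le L hadd hmono hgadm
    have h4 : L g = Filter.atTop.liminf (fun j => intf g (νs (φ j))) := ((hL g).liminf_eq).symm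
    have h5 : Filter.atTop.liminf (fun j => intf g (νs (φ j)))
        ≤ Filter.atTop.liminf (fun j => ((νs (φ j)) G : ℝ)) := by
      exact Filter.liminf_le_liminf (Filter.Eventually.of_forall (fun j => h2 _))
        (hu := Filter.isBoundedUnder_of ⟨-‖g‖, fun j => (abs_le.mp (abs_intf_le g _)).1⟩)
        (hv := Filter.IsBoundedUnder.isCoboundedUnder_ge
          (Filter.isBoundedUnder_of ⟨1, fun j => by
            have := ProbabilityMeasure.apply_le_one (νs (φ j)) G
            exact_mod_cast this⟩))
    have h6 : Filter.atTop.liminf (fun j => ((νs (φ j)) G : ℝ)) = (r : ℝ) := by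
      rw [hr]
      refine (Monotone.map_liminf_of_continuousAt (F := Filter.atTop)
        NNReal.coe_mono (fun j => (νs (φ j)) G)
        (NNReal.continuous_coe.continuousAt) ?_ ?_).symm
      · exact Filter.IsBoundedUnder.isCoboundedUnder_ge
          (Filter.isBoundedUnder_of ⟨1, fun j => ProbabilityMeasure.apply_le_one _ _⟩)
      · exact Filter.isBoundedUnder_of ⟨0, fun j => zero_le⟩
    linarith
  have : (P0 G : ℝ≥0∞) ≤ (r : ℝ≥0∞) := by
    rwa [ProbabilityMeasure.ennreal_coeFn_eq_coeFn_toMeasure]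
  exact_mod_cast this

end Compactness

section Main

open Filter Topology BoundedContinuousFunction TopologicalSpace Set

set_option linter.unusedSectionVars false

variable [Nonempty X]

lemma invMeasures_eq (T : X → X) (hT : Continuous T) :
    invMeasures T = {ν : ProbabilityMeasure X | ν.map hT.measurable.aemeasurable = ν} := by
  ext ν
  constructor
  · intro h
    apply Subtype.ext
    show (ν.map hT.measurable.aemeasurable).toMeasure = ν.toMeasure
    rw [ProbabilityMeasure.toMeasure_map]
    exact h.map_eq
  · intro h
    refine ⟨hT.measurable, ?_⟩
    have h' := congrArg ProbabilityMeasure.toMeasure h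
    rwa [ProbabilityMeasure.toMeasure_map] at h'

lemma isClosed_invMeasures (T : X → X) (hT : Continuous T) :
    IsClosed (invMeasures T) := by
  rw [invMeasures_eq T hT]
  exact isClosed_eq (ProbabilityMeasure.continuous_map hT) continuous_id

lemma beta_eq_sSup_intf (T : X → X) (f : C(X, ℝ)) :
    beta T ⇑f = sSup (intf f '' invMeasures T) := rfl

lemma maxInts_eq_image (T : X → X) (f g : C(X, ℝ)) :
    maxInts T ⇑f ⇑g = intf g '' Mmax T ⇑f := rfl

lemma mem_Mmax_iff (T : X → X) (f : C(X, ℝ)) (ν : ProbabilityMeasure X) :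
    ν ∈ Mmax T ⇑f ↔ ν ∈ invMeasures T ∧ intf f ν = beta T ⇑f := Iff.rfl

omit [Nonempty X] in
theorem stmt15 [Nonempty X] (T : X → X) (hT : Continuous T) (g : C(X, ℝ)) :
    UpperSemicontinuous (fun f : C(X, ℝ) =>
      sSup (maxInts T ⇑f ⇑g) - sInf (maxInts T ⇑f ⇑g)) := by
  haveI := probMeasCompact X
  intro f₀ y hy
  by_cases hne : (invMeasures T).Nonempty
  swap
  · -- no invariant measures: the function is identically zero
    rw [Set.not_nonempty_iff_eq_empty] at hne
    have hempty : ∀ f : C(X, ℝ), maxInts T ⇑f ⇑g = ∅ := by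
      intro f
      rw [maxInts_eq_image, Set.image_eq_empty, Set.eq_empty_iff_forall_notMem]
      intro ν hν
      have : ν ∈ invMeasures T := ((mem_Mmax_iff T f ν).mp hν).1
      rw [hne] at this
      exact this
    have hconst : ∀ f : C(X, ℝ),
        sSup (maxInts T ⇑f ⇑g) - sInf (maxInts T ⇑f ⇑g) = 0 := by
      intro f
      rw [hempty f, Real.sSup_empty, Real.sInf_empty, sub_zero]
    have h0 : (0 : ℝ) < y := by simpa [hconst f₀] using hy
    filter_upwards [Filter.univ_mem] with f _
    simpa [hconst f] using h0
  -- main case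
  have hclosed := isClosed_invMeasures T hT
  have hcomp : IsCompact (invMeasures T) := hclosed.isCompact
  -- basic facts about beta
  have hble : ∀ (f : C(X, ℝ)) (ν : ProbabilityMeasure X), ν ∈ invMeasures T →
      intf f ν ≤ beta T ⇑f := by
    intro f ν hν
    rw [beta_eq_sSup_intf]
    exact le_csSup (hcomp.image (continuous_intf f)).bddAbove (Set.mem_image_of_mem _ hν)
  have hbeta_attained : ∀ f : C(X, ℝ), ∃ ν ∈ invMeasures T, intf f ν = beta T ⇑f := by
    intro f
    obtain ⟨ν, hν, hmax⟩ := hcomp.exists_isMaxOn hne (continuous_intf f).continuousOn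
    refine ⟨ν, hν, ?_⟩
    rw [beta_eq_sSup_intf]
    exact (IsGreatest.csSup_eq ⟨Set.mem_image_of_mem _ hν, by
      rintro b ⟨ν', hν', rfl⟩; exact hmax hν'⟩).symm
  have hMmax_compact : ∀ f : C(X, ℝ), IsCompact (Mmax T ⇑f) := by
    intro f
    have : Mmax T ⇑f = invMeasures T ∩ {ν | intf f ν = beta T ⇑f} := rfl
    rw [this]
    exact (hclosed.inter (isClosed_eq (continuous_intf f) continuous_const)).isCompact
  have hMmax_ne : ∀ f : C(X, ℝ), (Mmax T ⇑f).Nonempty := by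
    intro f
    obtain ⟨ν, hν, hb⟩ := hbeta_attained f
    exact ⟨ν, hν, hb⟩
  -- continuity of beta
  have hbeta_lip : ∀ f f' : C(X, ℝ), beta T ⇑f ≤ beta T ⇑f' + dist f f' := by
    intro f f'
    rw [beta_eq_sSup_intf]
    apply csSup_le (hne.image _)
    rintro b ⟨ν, hν, rfl⟩
    have h1 : intf f ν - intf f' ν ≤ dist f f' := by
      rw [← intf_sub]
      exact le_trans (le_abs_self _) (le_trans (abs_intf_le _ _)
        (le_of_eq (dist_eq_norm f f').symm))
    have h2 := hble f' ν hν
    linarith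
  have hbeta_cont : Continuous (fun f : C(X, ℝ) => beta T ⇑f) := by
    apply LipschitzWith.continuous (K := 1)
    apply LipschitzWith.of_dist_le_mul
    intro f f'
    rw [NNReal.coe_one, one_mul, Real.dist_eq, abs_sub_le_iff]
    have h1 := hbeta_lip f f'
    have h2 := hbeta_lip f' f
    have h3 : dist f' f = dist f f' := dist_comm _ _
    constructor <;> linarith
  -- the closed "bad" set
  set A : Set ((ProbabilityMeasure X × ProbabilityMeasure X) × C(X, ℝ)) :=
    {p | p.1.1 ∈ invMeasures T ∧ p.1.2 ∈ invMeasures T ∧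
      beta T ⇑p.2 ≤ intf p.2 p.1.1 ∧ beta T ⇑p.2 ≤ intf p.2 p.1.2 ∧
      y ≤ intf g p.1.1 - intf g p.1.2} with hA_def
  have c11 : Continuous (fun p : (ProbabilityMeasure X × ProbabilityMeasure X) × C(X, ℝ) =>
      p.1.1) := continuous_fst.comp continuous_fst
  have c12 : Continuous (fun p : (ProbabilityMeasure X × ProbabilityMeasure X) × C(X, ℝ) =>
      p.1.2) := continuous_snd.comp continuous_fst
  have hA : IsClosed A := by
    refine IsClosed.inter (hclosed.preimage c11) (IsClosed.inter (hclosed.preimage c12)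
      (IsClosed.inter ?_ (IsClosed.inter ?_ ?_)))
    · exact isClosed_le (hbeta_cont.comp continuous_snd)
        (continuous_intf2.comp (continuous_snd.prodMk c11))
    · exact isClosed_le (hbeta_cont.comp continuous_snd)
        (continuous_intf2.comp (continuous_snd.prodMk c12))
    · exact isClosed_le continuous_const
        (((continuous_intf g).comp c11).sub ((continuous_intf g).comp c12))
  have hbddA : BddAbove (maxInts T ⇑f₀ ⇑g) :=
    (((hMmax_compact f₀).image (continuous_intf g)).bddAbove)
  have hbddB : BddBelow (maxInts T ⇑f₀ ⇑g) :=
    (((hMmax_compact f₀).image (continuous_intf g)).bddBelow)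
  have hslice : ∀ ν₁ ν₂ : ProbabilityMeasure X, ((ν₁, ν₂), f₀) ∉ A := by
    rintro ν₁ ν₂ ⟨h1, h2, h3, h4, h5⟩
    have hm1 : ν₁ ∈ Mmax T ⇑f₀ := ⟨h1, le_antisymm (hble f₀ ν₁ h1) h3⟩
    have hm2 : ν₂ ∈ Mmax T ⇑f₀ := ⟨h2, le_antisymm (hble f₀ ν₂ h2) h4⟩
    have e1 : intf g ν₁ ≤ sSup (maxInts T ⇑f₀ ⇑g) :=
      le_csSup hbddA (Set.mem_image_of_mem _ hm1)
    have e2 : sInf (maxInts T ⇑f₀ ⇑g) ≤ intf g ν₂ :=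
      csInf_le hbddB (Set.mem_image_of_mem _ hm2)
    simp only at hy
    linarith
  have hC : IsClosed (Prod.snd '' A) := isClosedMap_snd_of_compactSpace _ hA
  have hf₀ : f₀ ∉ Prod.snd '' A := by
    rintro ⟨⟨⟨ν₁, ν₂⟩, f⟩, hmem, hsnd⟩
    have : f = f₀ := hsnd
    rw [this] at hmem
    exact hslice ν₁ ν₂ hmem
  filter_upwards [hC.isOpen_compl.mem_nhds hf₀] with f hf
  -- for such f, the diameter is < y
  have hMc : IsCompact (maxInts T ⇑f ⇑g) := (hMmax_compact f).image (continuous_intf g)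
  have hMne : (maxInts T ⇑f ⇑g).Nonempty := (hMmax_ne f).image _
  obtain ⟨ν₁, hν₁, hs1⟩ : sSup (maxInts T ⇑f ⇑g) ∈ intf g '' Mmax T ⇑f :=
    hMc.sSup_mem hMne
  obtain ⟨ν₂, hν₂, hs2⟩ : sInf (maxInts T ⇑f ⇑g) ∈ intf g '' Mmax T ⇑f :=
    hMc.sInf_mem hMne
  by_contra hcon
  push_neg at hcon
  have hyle : y ≤ intf g ν₁ - intf g ν₂ := by
    rw [hs1, hs2]; exact hcon
  have : ((ν₁, ν₂), f) ∈ A :=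
    ⟨hν₁.1, hν₂.1, hν₁.2.ge, hν₂.2.ge, hyle⟩
  exact hf ⟨((ν₁, ν₂), f), this, rfl⟩

end Main
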